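/- arXiv:0704.1057 — 7 statements merged into one kernel-verified Lean document; each statement's English description precedes it below -/
import Mathlib

section
/- If every natural number of the form 3k + 4 (k ≥ 0) eventually reaches 1 under iteration of T, then every natural number n ≥ 1 eventually reaches 1 under iteration of T. -/
/-- The Collatz map `T`. -/
def T (n : ℕ) : ℕ := if n % 2 = 1 then (3 * n + 1) / 2 else n / 2

theorem stmt_5 (h : ∀ k : ℕ, ∃ j : ℕ, T^[j] (3 * k + 4) = 1) :
    ∀ n : ℕ, 1 ≤ n → ∃ j : ℕ, T^[j] n = 1 := by
  intro n
  induction n using Nat.strong_induction_on with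
  | _ n ih =>
    intro hn
    rcases Nat.even_or_odd n with he | ho
    · -- even: n/2 < n
      rcases eq_or_lt_of_le hn with h1 | h1
      · exact ⟨0, by simp [← h1]⟩
      · obtain ⟨j, hj⟩ := ih (n / 2) (Nat.div_lt_self (by omega) one_lt_two) (by omega)
        refine ⟨j + 1, ?_⟩
        rw [Function.iterate_succ_apply]
        have : T n = n / 2 := by
          unfold T
          have : n % 2 = 0 := Nat.even_iff.mp he
          simp [this]
        rw [this, hj]
    · -- odd
      rcases eq_or_lt_of_le hn with h1 | h1
      · exact ⟨0, by simp [← h1]⟩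
      · obtain ⟨j, hj⟩ := h (n - 1)
        have hkey : 3 * (n - 1) + 4 = 3 * n + 1 := by omega
        rw [hkey] at hj
        have hne : (3 * n + 1) ≠ 1 := by omega
        cases j with
        | zero => simp at hj; omega
        | succ j' =>
          refine ⟨j' + 1, ?_⟩
          rw [Function.iterate_succ_apply] at hj ⊢
          have hodd : n % 2 = 1 := Nat.odd_iff.mp ho
          have hT1 : T (3 * n + 1) = (3 * n + 1) / 2 := by
            unfold T
            have : (3 * n + 1) % 2 = 0 := by omega
            simp [this]
          have hT2 : T n = (3 * n + 1) / 2 := by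
            unfold T
            simp [hodd]
          rw [hT2, ← hT1, hj]
end

section
/- T maps Λ_{m+1} into Λ_m for every m ∈ ℕ: if n ∈ ℕ can be written as n = 2^{m+1}/3^l − Σ_{k=1}^{l} 2^{b_k}/3^k with 0 ≤ l ≤ m−2 and 0 ≤ b₁ < b₂ < ⋯ < b_l ≤ m−3 (for m+1 ≥ 4; Λ_j = {2^j} for j ≤ 3), then T(n) admits such a representation with m in place of m+1. -/
/-- Membership in `Λ_m`: `n = 2^m/3^l − Σ_{k=1}^l 2^{b_k}/3^k` with
`0 ≤ l ≤ m−3` and `0 ≤ b₁ < ⋯ < b_l ≤ m−4` (truncated subtraction handles `m ≤ 3`,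
forcing `l = 0` and `n = 2^m` there). -/
def InLambda (m n : ℕ) : Prop :=
  ∃ (l : ℕ) (b : Fin l → ℕ), l ≤ m - 3 ∧ StrictMono b ∧ (∀ i, b i ≤ m - 4) ∧
    (n : ℚ) = 2 ^ m / 3 ^ l - ∑ i : Fin l, (2 ^ (b i) : ℚ) / 3 ^ (i.val + 1)

theorem stmt_12 (m n : ℕ) (h : InLambda (m + 1) n) : InLambda m (T n) := by
  obtain ⟨l, b, hl, hmono, hb, heq⟩ := h
  have h3 : ∀ k : ℕ, ((3:ℚ)^k) ≠ 0 := fun k => by positivity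
  have hval : ∀ (k : ℕ) (hk : k < l) (h0 : 0 < l), b ⟨0, h0⟩ + k ≤ b ⟨k, hk⟩ := by
    intro k
    induction k with
    | zero => intro hk h0; simp
    | succ j ih =>
      intro hk h0
      have h1 := ih (by omega) h0
      have h2 : b ⟨j, by omega⟩ < b ⟨j + 1, hk⟩ := hmono (by simp [Fin.lt_def])
      omega
  have hZ : (n : ℤ) * 3 ^ l = 2 ^ (m + 1) - ∑ i : Fin l, 2 ^ (b i) * 3 ^ (l - 1 - i.val) := by
    have hcast : (((n : ℤ) * 3 ^ l : ℤ) : ℚ)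
        = ((2 ^ (m + 1) - ∑ i : Fin l, 2 ^ (b i) * 3 ^ (l - 1 - i.val) : ℤ) : ℚ) := by
      push_cast
      rw [heq, sub_mul, div_mul_cancel₀ _ (h3 l), Finset.sum_mul]
      congr 1
      apply Finset.sum_congr rfl
      intro i _
      have h3l : (3:ℚ) ^ l = 3 ^ (i.val + 1) * 3 ^ (l - 1 - i.val) := by
        rw [← pow_add]; congr 1; have := i.2; omega
      rw [h3l, ← mul_assoc, div_mul_cancel₀ _ (h3 _)]
    exact_mod_cast hcast
  by_cases hcase : ∃ h0 : 0 < l, b ⟨0, h0⟩ = 0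
  · -- odd case
    obtain ⟨h0, hb0⟩ := hcase
    obtain ⟨l', rfl⟩ : ∃ l', l = l' + 1 := ⟨l - 1, by omega⟩
    have hb0' : b 0 = 0 := hb0
    have hbs : ∀ j : Fin l', 1 ≤ b j.succ := by
      intro j
      have h1 := hval (j.val + 1) j.succ.2 h0
      have he : b ⟨0, h0⟩ = 0 := hb0
      have he2 : b ⟨j.val + 1, j.succ.2⟩ = b j.succ := rfl
      omega
    have hodd : Odd ((n : ℤ) * 3 ^ (l' + 1)) := by
      rw [hZ]
      refine Even.sub_odd ⟨2 ^ m, by ring⟩ ?_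
      rw [Fin.sum_univ_succ]
      refine Odd.add_even ?_ ?_
      · rw [show b 0 = 0 from hb0', pow_zero, one_mul]
        exact Odd.pow (by decide)
      · have hdv : (2:ℤ) ∣ ∑ i : Fin l', 2 ^ (b i.succ) * 3 ^ (l' + 1 - 1 - i.succ.val) := by
          refine Finset.dvd_sum ?_
          intro i _
          exact Dvd.dvd.mul_right (dvd_pow_self 2 (by have := hbs i; omega)) _
        obtain ⟨k, hk⟩ := hdv
        exact ⟨k, by omega⟩
    have hoddn : n % 2 = 1 := by
      have h1 := (Int.odd_mul.mp hodd).1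
      have h2 : Odd n := by exact_mod_cast h1
      rcases h2 with ⟨c, hc⟩
      omega
    have hTn : T n = (3 * n + 1) / 2 := by simp [T, hoddn]
    have hdvd : 2 ∣ 3 * n + 1 := by omega
    refine ⟨l', fun j => b j.succ - 1, ?_, ?_, ?_, ?_⟩
    · rcases Nat.eq_zero_or_pos l' with h|h
      · omega
      · have h1 := hval l' (by omega) h0
        have h2 := hb ⟨l', by omega⟩
        have he : b ⟨0, h0⟩ = 0 := hb0
        omega
    · intro j k hjk
      have h1 := hbs j
      have h2 : b j.succ < b k.succ := hmono (Fin.succ_lt_succ_iff.mpr hjk)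
      show b j.succ - 1 < b k.succ - 1
      omega
    · intro j
      have h1 := hbs j
      have h2 := hb j.succ
      show b j.succ - 1 ≤ m - 4
      omega
    · set S : ℚ := ∑ j : Fin l', (2 ^ (b j.succ) : ℚ) / 3 ^ (j.val + 1 + 1) with hS_def
      set S' : ℚ := ∑ j : Fin l', (2 ^ (b j.succ - 1) : ℚ) / 3 ^ (j.val + 1) with hS'_def
      have heq' : (n : ℚ) = 2 ^ (m + 1) / 3 ^ (l' + 1) - (1 / 3 + S) := by
        rw [heq, Fin.sum_univ_succ, hb0']
        norm_num [Fin.val_succ, hS_def]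
      have hP : (3:ℚ) * (2 ^ (m + 1) / 3 ^ (l' + 1)) = 2 * (2 ^ m / 3 ^ l') := by
        rw [pow_succ, pow_succ]
        field_simp
      have hS : 3 * S = 2 * S' := by
        rw [hS_def, hS'_def, Finset.mul_sum, Finset.mul_sum]
        apply Finset.sum_congr rfl
        intro j _
        have h1 := hbs j
        have h2 : (2:ℚ) ^ (b j.succ) = 2 * 2 ^ (b j.succ - 1) := by
          rw [← pow_succ']; congr 1; omega
        rw [h2, pow_succ (3:ℚ) (j.val + 1)]
        field_simp
      have hq : (((3 * n + 1) / 2 : ℕ) : ℚ) = 2 ^ m / 3 ^ l' - S' := by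
        rw [Nat.cast_div hdvd (by norm_num)]
        push_cast
        have : (3:ℚ) * n + 1 = 2 * (2 ^ m / 3 ^ l' - S') := by
          rw [mul_sub]
          linarith [heq', hP, hS]
        rw [this]
        ring
      rw [hTn, hq, hS'_def]
  · -- even case
    have hbpos : ∀ i : Fin l, 1 ≤ b i := by
      intro i
      by_contra hc
      push_neg at hc
      have h0 : 0 < l := i.pos
      have h1 := hval i.val i.2 h0
      have heta : b ⟨i.val, i.2⟩ = b i := rfl
      exact hcase ⟨h0, by omega⟩
    have hev : Even ((n : ℤ) * 3 ^ l) := by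
      rw [hZ]
      refine Even.sub ⟨2 ^ m, by ring⟩ ?_
      have hdv : (2:ℤ) ∣ ∑ i : Fin l, 2 ^ (b i) * 3 ^ (l - 1 - i.val) := by
        refine Finset.dvd_sum ?_
        intro i _
        exact Dvd.dvd.mul_right (dvd_pow_self 2 (by have := hbpos i; omega)) _
      obtain ⟨k, hk⟩ := hdv
      exact ⟨k, by omega⟩
    have hevn : n % 2 = 0 := by
      have h1 := (Int.even_mul.mp hev).resolve_right (by
        rw [Int.even_pow]
        rintro ⟨h3e, -⟩
        exact absurd h3e (by decide))
      have h2 : Even n := by exact_mod_cast h1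
      rcases h2 with ⟨c, hc⟩
      omega
    have hTn : T n = n / 2 := by simp [T, hevn]
    have hdvd : 2 ∣ n := by omega
    refine ⟨l, fun i => b i - 1, ?_, ?_, ?_, ?_⟩
    · rcases Nat.eq_zero_or_pos l with h|h
      · omega
      · have h1 := hval (l - 1) (by omega) h
        have h2 := hb ⟨l - 1, by omega⟩
        have h3' := hbpos ⟨0, h⟩
        omega
    · intro j k hjk
      have h1 := hbpos j
      have h2 : b j < b k := hmono hjk
      show b j - 1 < b k - 1
      omega
    · intro i
      have h1 := hbpos i
      have h2 := hb i
      show b i - 1 ≤ m - 4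
      omega
    · have hq : ((n : ℕ) : ℚ)
          = 2 * (2 ^ m / 3 ^ l - ∑ i : Fin l, (2 ^ (b i - 1) : ℚ) / 3 ^ (i.val + 1)) := by
        rw [heq, mul_sub, Finset.mul_sum]
        congr 1
        · rw [pow_succ]; ring
        · apply Finset.sum_congr rfl
          intro i _
          have h2 : (2:ℚ) ^ (b i) = 2 * 2 ^ (b i - 1) := by
            rw [← pow_succ']; congr 1; have := hbpos i; omega
          rw [h2, mul_div_assoc]
      have hfin : ((n / 2 : ℕ) : ℚ)
          = 2 ^ m / 3 ^ l - ∑ i : Fin l, (2 ^ (b i - 1) : ℚ) / 3 ^ (i.val + 1) := by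
        rw [Nat.cast_div hdvd (by norm_num), hq]
        ring
      rw [hTn, hfin]
end

section
/- For all m ∈ ℕ, Λ_m ⊆ S_m: every n ∈ Λ_m satisfies σ∞(n) = m. -/
/-- The total stopping time `σ∞(n)`: the least `k` with `T^[k] n = 1`. -/
noncomputable def sigmaInf (n : ℕ) : ℕ := sInf {k | T^[k] n = 1}

/-- Natural-number version of `InLambda`. -/
def InLam (m n : ℕ) : Prop :=
  ∃ (l : ℕ) (b : Fin l → ℕ), l ≤ m - 3 ∧ StrictMono b ∧ (∀ i, b i ≤ m - 4) ∧
    3 ^ l * n + ∑ i : Fin l, 2 ^ (b i) * 3 ^ (l - 1 - i.val) = 2 ^ m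

lemma inLambda_to_inLam {m n : ℕ} (h : InLambda m n) : InLam m n := by
  obtain ⟨l, b, hl, hmono, hb, heq⟩ := h
  refine ⟨l, b, hl, hmono, hb, ?_⟩
  have key : ∀ i : Fin l, ((2 : ℚ) ^ (b i) * 3 ^ (l - 1 - i.val))
      = 3 ^ l * ((2 ^ (b i) : ℚ) / 3 ^ (i.val + 1)) := by
    intro i
    have hi : (l - 1 - i.val) + (i.val + 1) = l := by omega
    field_simp
    have h3 : (3 : ℚ) ^ l = 3 ^ (l - 1 - i.val) * 3 ^ (i.val + 1) := by
      rw [← pow_add, hi]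
    rw [h3]
  have hcast : ((3 ^ l * n + ∑ i : Fin l, 2 ^ (b i) * 3 ^ (l - 1 - i.val) : ℕ) : ℚ)
      = 2 ^ m := by
    push_cast
    rw [heq]
    rw [Finset.sum_congr rfl fun i _ => key i, ← Finset.mul_sum]
    have h3 : (3 : ℚ) ^ l ≠ 0 := by positivity
    field_simp
    ring
  exact_mod_cast hcast

lemma T_one_step {m n : ℕ} (h : InLam (m + 1) n) : InLam m (T n) := by
  obtain ⟨l, b, hl, hmono, hb, heq⟩ := h
  match l, b, hl, hmono, hb, heq with
  | 0, b, hl, hmono, hb, heq =>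
    -- n = 2^(m+1), even
    simp only [pow_zero, one_mul, Finset.univ_eq_empty, Finset.sum_empty, add_zero] at heq
    have hev : n % 2 = 0 := by
      subst heq
      simp [pow_succ, Nat.mul_mod]
    have hT : T n = 2 ^ m := by
      simp only [T, hev, if_neg (by omega : ¬ (0 : ℕ) = 1)]
      subst heq
      rw [pow_succ, Nat.mul_div_cancel]
      omega
    refine ⟨0, Fin.elim0, Nat.zero_le _, fun i => i.elim0, fun i => i.elim0, ?_⟩
    simp [hT]
  | l' + 1, b, hl, hmono, hb, heq =>
    -- split the sum
    have hsum : ∑ i : Fin (l' + 1), 2 ^ (b i) * 3 ^ (l' + 1 - 1 - i.val)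
        = 2 ^ (b 0) * 3 ^ l' + ∑ i : Fin l', 2 ^ (b i.succ) * 3 ^ (l' - 1 - i.val) := by
      rw [Fin.sum_univ_succ]
      congr 1
      apply Finset.sum_congr rfl
      intro i _
      have hexp : l' + 1 - 1 - (i.succ : Fin (l' + 1)).val = l' - 1 - i.val := by
        simp only [Fin.val_succ]
        omega
      rw [hexp]
    rw [hsum] at heq
    have hge : ∀ i : Fin (l' + 1), i.val ≤ b i := by
      intro i
      induction i using Fin.induction with
      | zero => exact Nat.zero_le _
      | succ j ih =>
        have := hmono (Fin.castSucc_lt_succ : j.castSucc < j.succ)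
        simp only [Fin.coe_castSucc, Fin.val_succ] at *
        omega
    have hbsucc : ∀ i : Fin l', b 0 < b i.succ := by
      intro i
      exact hmono i.succ_pos
    have hS2' : 2 ∣ ∑ i : Fin l', 2 ^ (b i.succ) * 3 ^ (l' - 1 - i.val) := by
      apply Finset.dvd_sum
      intro i _
      exact Dvd.dvd.mul_right (dvd_pow_self 2 (by have := hbsucc i; omega)) _
    obtain ⟨s, hs⟩ := hS2'
    by_cases hb0 : b 0 = 0
    · -- odd case
      rw [hb0] at heq
      simp only [pow_zero, one_mul] at heq
      have h3odd : (3 : ℕ) ^ l' % 2 = 1 := Nat.odd_iff.mp (Odd.pow (by decide))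
      have hpow : (2 : ℕ) ^ (m + 1) = 2 * 2 ^ m := by ring
      have hXodd : (3 ^ (l' + 1) * n) % 2 = 1 := by omega
      have hnodd : n % 2 = 1 := by
        have hX : Odd (3 ^ (l' + 1) * n) := Nat.odd_iff.mpr hXodd
        exact Nat.odd_iff.mp (Nat.odd_mul.mp hX).2
      have hT : T n = (3 * n + 1) / 2 := by simp [T, hnodd]
      refine ⟨l', fun i => b i.succ - 1, by omega, ?_, ?_, ?_⟩
      · intro i j hij
        show b i.succ - 1 < b j.succ - 1
        have h1 := hmono (show i.succ < j.succ by simpa using hij)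
        have h2 := hbsucc i
        omega
      · intro i
        show b i.succ - 1 ≤ m - 4
        have h1 := hb i.succ
        have h2 := hbsucc i
        omega
      · apply Nat.eq_of_mul_eq_mul_left (show 0 < 2 by norm_num)
        have hdvd : 2 ∣ 3 * n + 1 := by omega
        rw [Nat.mul_add, Finset.mul_sum]
        have hterm : ∀ i : Fin l', 2 * (2 ^ (b i.succ - 1) * 3 ^ (l' - 1 - i.val))
            = 2 ^ (b i.succ) * 3 ^ (l' - 1 - i.val) := by
          intro i
          have h2 := hbsucc i
          rw [← mul_assoc, ← pow_succ']
          congr 2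
          omega
        rw [Finset.sum_congr rfl fun i _ => hterm i]
        rw [hT, ← mul_assoc, mul_comm 2 (3 ^ l'), mul_assoc, Nat.mul_div_cancel' hdvd]
        have hexp : 3 ^ l' * (3 * n + 1) = 3 ^ (l' + 1) * n + 3 ^ l' := by ring
        rw [hexp]
        have : (2 : ℕ) * 2 ^ m = 2 ^ (m + 1) := by ring
        rw [this]
        omega
    · -- even case
      have hb1 : 1 ≤ b 0 := by omega
      have hnev : n % 2 = 0 := by
        have h0dvd : 2 ∣ 2 ^ (b 0) * 3 ^ l' :=
          Dvd.dvd.mul_right (dvd_pow_self 2 (by omega)) _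
        obtain ⟨u, hu⟩ := h0dvd
        have hpow : (2 : ℕ) ^ (m + 1) = 2 * 2 ^ m := by ring
        have hX : (3 ^ (l' + 1) * n) % 2 = 0 := by omega
        rcases Nat.even_or_odd n with he | ho
        · exact Nat.even_iff.mp he
        · exfalso
          have hO : Odd (3 ^ (l' + 1) * n) := Odd.mul (Odd.pow (by decide)) ho
          rw [Nat.odd_iff] at hO
          omega
      have hT : T n = n / 2 := by simp [T, hnev]
      have hge1 : ∀ i : Fin (l' + 1), i.val + 1 ≤ b i := by
        intro i
        induction i using Fin.induction with
        | zero => simpa using hb1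
        | succ j ih =>
          have h2 := hmono (Fin.castSucc_lt_succ : j.castSucc < j.succ)
          simp only [Fin.coe_castSucc, Fin.val_succ] at *
          omega
      have hlast := hge1 (Fin.last l')
      have hblast := hb (Fin.last l')
      simp only [Fin.val_last] at hlast hblast
      refine ⟨l' + 1, fun i => b i - 1, by omega, ?_, ?_, ?_⟩
      · intro i j hij
        show b i - 1 < b j - 1
        have h1 := hmono hij
        have h2 := hge1 i
        omega
      · intro i
        show b i - 1 ≤ m - 4
        have h1 := hb i
        have h2 := hge1 i
        omega
      · apply Nat.eq_of_mul_eq_mul_left (show 0 < 2 by norm_num)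
        have hdvd : 2 ∣ n := by omega
        rw [Nat.mul_add, Finset.mul_sum]
        have hterm : ∀ i : Fin (l' + 1), 2 * (2 ^ (b i - 1) * 3 ^ (l' + 1 - 1 - i.val))
            = 2 ^ (b i) * 3 ^ (l' + 1 - 1 - i.val) := by
          intro i
          have h2 := hge1 i
          rw [← mul_assoc, ← pow_succ']
          congr 2
          omega
        rw [Finset.sum_congr rfl fun i _ => hterm i]
        rw [hT, ← mul_assoc, mul_comm 2 (3 ^ (l' + 1)), mul_assoc, Nat.mul_div_cancel' hdvd]
        rw [hsum]
        have : (2 : ℕ) * 2 ^ m = 2 ^ (m + 1) := by ring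
        rw [this]
        exact heq

lemma inLam_iterate : ∀ m n, InLam m n → T^[m] n = 1 := by
  intro m
  induction m with
  | zero =>
    intro n h
    obtain ⟨l, b, hl, _, _, heq⟩ := h
    have hl0 : l = 0 := by omega
    subst hl0
    simpa using heq
  | succ m ih =>
    intro n h
    rw [Function.iterate_succ_apply]
    exact ih (T n) (T_one_step h)

lemma inLam_shift : ∀ k m n, InLam m n → k ≤ m → InLam (m - k) (T^[k] n) := by
  intro k
  induction k with
  | zero => intro m n h _; simpa using h
  | succ k ih =>
    intro m n h hk
    obtain ⟨m', rfl⟩ : ∃ m', m = m' + 1 := ⟨m - 1, by omega⟩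
    rw [Function.iterate_succ_apply]
    have := ih m' (T n) (T_one_step h) (by omega)
    have he : m' + 1 - (k + 1) = m' - k := by omega
    rw [he]
    exact this

lemma inLam_one {n : ℕ} (h : InLam 1 n) : n = 2 := by
  obtain ⟨l, b, hl, _, _, heq⟩ := h
  have hl0 : l = 0 := by omega
  subst hl0
  simpa using heq

lemma inLam_two {n : ℕ} (h : InLam 2 n) : n = 4 := by
  obtain ⟨l, b, hl, _, _, heq⟩ := h
  have hl0 : l = 0 := by omega
  subst hl0
  simpa using heq

lemma iterate_one (j : ℕ) : T^[j] 1 = 1 ∨ T^[j] 1 = 2 := by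
  induction j with
  | zero => left; rfl
  | succ j ih =>
    rw [Function.iterate_succ_apply']
    rcases ih with h | h <;> rw [h]
    · right; rfl
    · left; rfl

lemma not_one_before {m n k : ℕ} (h : InLam m n) (hk : k < m) : T^[k] n ≠ 1 := by
  intro h1
  have h2 := inLam_shift k m n h (le_of_lt hk)
  rw [h1] at h2
  set j := m - k with hj
  have hj1 : 1 ≤ j := by omega
  rcases Nat.lt_or_ge j 2 with hj2 | hj2
  · have : j = 1 := by omega
    rw [this] at h2
    exact absurd (inLam_one h2) (by norm_num)
  · have h3 := inLam_shift (j - 2) j 1 h2 (by omega)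
    have he : j - (j - 2) = 2 := by omega
    rw [he] at h3
    have h4 := inLam_two h3
    rcases iterate_one (j - 2) with h5 | h5 <;> omega

theorem stmt_13 (m n : ℕ) (h : InLambda m n) :
    T^[m] n = 1 ∧ sigmaInf n = m := by
  have hL := inLambda_to_inLam h
  have hiter : T^[m] n = 1 := inLam_iterate m n hL
  refine ⟨hiter, ?_⟩
  have hmemm : m ∈ {k | T^[k] n = 1} := hiter
  have hne : {k | T^[k] n = 1}.Nonempty := ⟨m, hmemm⟩
  have hmem := Nat.sInf_mem hne
  have hle : sInf {k | T^[k] n = 1} ≤ m := Nat.sInf_le hmemm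
  rcases Nat.lt_or_ge (sInf {k | T^[k] n = 1}) m with hlt | hge
  · exact absurd hmem (not_one_before hL hlt)
  · exact le_antisymm hle hge
end

section
/- For all m ∈ ℕ, S_m ⊆ Λ_m: if σ∞(n) = m then n can be written as n = 2^m/3^l − Σ_{k=1}^l 2^{b_k}/3^k with 0 ≤ l ≤ m−3 and 0 ≤ b₁ < ⋯ < b_l ≤ m−4 (and n = 2^m for m ≤ 3). Hence S_m = Λ_m for all m. -/
lemma clz_key {m n l : ℕ} (b : Fin l → ℕ)
    (hn : (n : ℚ) = 2 ^ m / 3 ^ l - ∑ i : Fin l, (2 ^ (b i) : ℚ) / 3 ^ (i.val + 1))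
    (hil : ∀ i : Fin l, i.val + 1 ≤ l) :
    n * 3 ^ l + ∑ i : Fin l, 2 ^ (b i) * 3 ^ (l - (i.val + 1)) = 2 ^ m := by
  have hterm : ∀ i : Fin l, ((2:ℚ)^(b i)/3^(i.val+1)) * 3^l = 2^(b i) * 3^(l-(i.val+1)) := by
    intro i
    have h3 : (3:ℚ)^l = 3^(i.val+1) * 3^(l-(i.val+1)) := by
      rw [← pow_add]; congr 1; have := hil i; omega
    rw [h3]
    have : (3:ℚ)^(i.val+1) ≠ 0 := by positivity
    field_simp
  have hq : ((n * 3 ^ l + ∑ i : Fin l, 2 ^ (b i) * 3 ^ (l - (i.val + 1)) : ℕ) : ℚ) = 2 ^ m := by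
    push_cast
    rw [hn, sub_mul, Finset.sum_mul]
    rw [Finset.sum_congr rfl fun i _ => hterm i]
    rw [div_mul_cancel₀]
    · ring
    · positivity
  exact_mod_cast hq

lemma clz_T_even {n : ℕ} (h : n % 2 = 0) : T n = n / 2 := by simp [T, h]
lemma clz_T_odd {n : ℕ} (h : n % 2 = 1) : T n = (3 * n + 1) / 2 := by simp [T, h]

lemma clz_step_down {m n : ℕ} (h : InLambda (m+1) n) : InLambda m (T n) := by
  obtain ⟨l, b, hl, hb, hb4, hn⟩ := h
  have key := clz_key b hn (fun i => i.isLt)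
  rcases Nat.eq_zero_or_pos l with hl0 | hlpos
  · subst hl0
    simp at key
    have hev : n % 2 = 0 := by
      have : n = 2 * 2 ^ m := by rw [key]; ring
      omega
    rw [clz_T_even hev]
    have hdiv : n / 2 = 2 ^ m := by omega
    rw [hdiv]
    exact ⟨0, fun i => i.elim0, by omega, fun i => i.elim0, fun i => i.elim0, by push_cast; simp⟩
  · obtain ⟨l', rfl⟩ : ∃ l', l = l' + 1 := ⟨l - 1, by omega⟩
    have hm3 : 3 ≤ m := by omega
    -- parity of n via ZMod 2
    have hz := congrArg (Nat.cast : ℕ → ZMod 2) key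
    push_cast at hz
    rw [show ((3:ZMod 2)) = 1 by decide, show ((2:ZMod 2)) = 0 by decide] at hz
    simp only [one_pow, mul_one, zero_pow (by omega : m + 1 ≠ 0)] at hz
    by_cases hb0 : b 0 = 0
    · -- n is odd
      rw [Fin.sum_univ_succ] at hz
      have htail : ∀ i : Fin l', (0:ZMod 2) ^ (b i.succ) = 0 := by
        intro i
        have : b 0 < b i.succ := hb (Fin.succ_pos i)
        exact zero_pow (by omega)
      rw [hb0] at hz
      simp only [pow_zero] at hz
      rw [Finset.sum_congr rfl (fun i _ => htail i)] at hz
      simp at hz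
      have h1 : (n : ZMod 2) = 1 := by
        have := eq_neg_of_add_eq_zero_left hz
        rw [this]; decide
      have hodd : n % 2 = 1 := by
        have hv := congrArg ZMod.val h1
        rwa [ZMod.val_natCast] at hv
      rw [clz_T_odd hodd]
      set c : Fin l' → ℕ := fun i => b i.succ - 1 with hc
      have hbc : ∀ i : Fin l', b i.succ = c i + 1 := by
        intro i
        have : b 0 < b i.succ := hb (Fin.succ_pos i)
        simp only [hc]; omega
      refine ⟨l', c, by omega, ?_, ?_, ?_⟩
      · intro i j hij
        have h1 := hbc i; have h2 := hbc j
        have := hb (Fin.succ_lt_succ_iff.mpr hij)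
        omega
      · intro i
        have := hb4 i.succ
        have := hbc i
        omega
      · have h2 : (3 * n + 1) / 2 * 2 = 3 * n + 1 := Nat.div_mul_cancel (by omega)
        have hcast : (((3 * n + 1) / 2 : ℕ) : ℚ) = ((3 * n + 1 : ℕ) : ℚ) / 2 := by
          field_simp
          exact_mod_cast congrArg (Nat.cast : ℕ → ℚ) h2
        rw [hcast]
        push_cast
        rw [Fin.sum_univ_succ, hb0] at hn
        simp only [pow_zero, Fin.val_zero, Fin.val_succ] at hn
        have hsum : ∑ i : Fin l', (2:ℚ) ^ (b i.succ) / 3 ^ (i.val + 1 + 1)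
            = (2/3) * ∑ i : Fin l', (2:ℚ) ^ (c i) / 3 ^ (i.val + 1) := by
          rw [Finset.mul_sum]
          refine Finset.sum_congr rfl fun i _ => ?_
          rw [hbc i, pow_succ 2 (c i), pow_succ 3 (i.val+1)]
          have : (3:ℚ)^(i.val+1) ≠ 0 := by positivity
          field_simp
        rw [hsum] at hn
        rw [hn]
        rw [pow_succ 2 m, pow_succ 3 l']
        have h3 : (3:ℚ) ^ l' ≠ 0 := by positivity
        field_simp
        ring
    · -- n is even
      have hge1 : ∀ i : Fin (l'+1), 1 ≤ b i := by
        intro i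
        have hmono : b 0 ≤ b i := hb.monotone (Fin.zero_le i)
        omega
      have hzero : ∀ i : Fin (l'+1), (0:ZMod 2) ^ (b i) = 0 := fun i =>
        zero_pow (by have := hge1 i; omega)
      rw [Finset.sum_congr rfl (fun i _ => hzero i)] at hz
      simp at hz
      have hev : n % 2 = 0 := by
        have hv := congrArg ZMod.val hz
        rwa [ZMod.val_natCast] at hv
      rw [clz_T_even hev]
      set c : Fin (l'+1) → ℕ := fun i => b i - 1 with hc
      have hbc : ∀ i, b i = c i + 1 := by
        intro i
        have := hge1 i
        simp only [hc]; omega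
      have hlb : ∀ k : ℕ, ∀ hk : k < l'+1, k + 1 ≤ b ⟨k, hk⟩ := by
        intro k
        induction k with
        | zero => intro hk; exact hge1 _
        | succ j ih =>
          intro hk
          have h1 := ih (by omega)
          have h2 : b ⟨j, by omega⟩ < b ⟨j+1, hk⟩ := hb (by simp [Fin.lt_def])
          omega
      have hlast := hlb l' (by omega)
      have hb4' := hb4 ⟨l', by omega⟩
      refine ⟨l'+1, c, by omega, ?_, ?_, ?_⟩
      · intro i j hij
        have h1 := hbc i; have h2 := hbc j
        have := hb hij
        omega
      · intro i
        have := hb4 i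
        have := hbc i
        omega
      · have h2 : n / 2 * 2 = n := Nat.div_mul_cancel (by omega)
        have hcast : ((n / 2 : ℕ) : ℚ) = (n : ℚ) / 2 := by
          field_simp
          exact_mod_cast congrArg (Nat.cast : ℕ → ℚ) h2
        rw [hcast]
        have hsum : ∑ i : Fin (l'+1), (2:ℚ) ^ (b i) / 3 ^ (i.val + 1)
            = 2 * ∑ i : Fin (l'+1), (2:ℚ) ^ (c i) / 3 ^ (i.val + 1) := by
          rw [Finset.mul_sum]
          refine Finset.sum_congr rfl fun i _ => ?_
          rw [hbc i, pow_succ 2 (c i)]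
          ring
        rw [hsum] at hn
        rw [hn]
        rw [pow_succ 2 m]
        have h3 : (3:ℚ) ^ (l'+1) ≠ 0 := by positivity
        field_simp

lemma clz_eq_pow {m n : ℕ} (hm : m ≤ 3) (h : InLambda m n) : n = 2 ^ m := by
  obtain ⟨l, b, hl, -, -, hn⟩ := h
  have hl0 : l = 0 := by omega
  subst hl0
  simp at hn
  exact_mod_cast hn

lemma clz_pow_mem (m : ℕ) : InLambda m (2 ^ m) :=
  ⟨0, fun i => i.elim0, by omega, fun i => i.elim0, fun i => i.elim0, by push_cast; simp⟩

lemma clz_up_even {m t : ℕ} (h : InLambda m t) : InLambda (m+1) (2 * t) := by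
  obtain ⟨l, b, hl, hb, hb4, ht⟩ := h
  rcases Nat.eq_zero_or_pos l with hl0 | hlpos
  · subst hl0
    simp at ht
    have : t = 2 ^ m := by exact_mod_cast ht
    subst this
    have : 2 * 2 ^ m = 2 ^ (m+1) := by ring
    rw [this]
    exact clz_pow_mem _
  · have hm4 : 4 ≤ m := by omega
    refine ⟨l, fun i => b i + 1, by omega, fun i j hij => by simp only; have := hb hij; omega,
      fun i => by simp only; have := hb4 i; omega, ?_⟩
    push_cast
    rw [ht]
    have hsum : ∑ i : Fin l, (2:ℚ) ^ (b i + 1) / 3 ^ (i.val + 1)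
        = 2 * ∑ i : Fin l, (2:ℚ) ^ (b i) / 3 ^ (i.val + 1) := by
      rw [Finset.mul_sum]
      refine Finset.sum_congr rfl fun i _ => ?_
      rw [pow_succ 2 (b i)]
      ring
    rw [hsum, pow_succ 2 m]
    ring

lemma clz_up_odd {m t n : ℕ} (hm : 3 ≤ m) (h : InLambda m t) (hn : 2 * t = 3 * n + 1) :
    InLambda (m+1) n := by
  obtain ⟨l, b, hl, hb, hb4, ht⟩ := h
  refine ⟨l + 1, Fin.cases 0 (fun i => b i + 1), by have := hl; omega, ?_, ?_, ?_⟩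
  · intro i j hij
    induction j using Fin.cases with
    | zero => exact (Nat.not_lt_zero i.val (by simp [Fin.lt_def] at hij)).elim
    | succ j =>
      induction i using Fin.cases with
      | zero => simp [Fin.cases_zero, Fin.cases_succ]
      | succ i =>
        simp only [Fin.cases_succ]
        have : i < j := by
          rw [Fin.lt_def] at hij ⊢
          simpa using hij
        have := hb this
        omega
  · intro i
    induction i using Fin.cases with
    | zero => simp
    | succ i =>
      simp only [Fin.cases_succ]
      have hli : 0 < l := i.pos
      have := hl
      have := hb4 i
      omega
  · have hq : (n : ℚ) = (2 * t - 1) / 3 := by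
      have : ((2 * t : ℕ) : ℚ) = ((3 * n + 1 : ℕ) : ℚ) := congrArg (Nat.cast : ℕ → ℚ) hn
      push_cast at this
      rw [this]
      ring
    rw [hq, ht]
    rw [Fin.sum_univ_succ]
    simp only [Fin.cases_zero, Fin.cases_succ, pow_zero, Fin.val_zero, Fin.val_succ]
    have hsum : ∑ i : Fin l, (2:ℚ) ^ (b i + 1) / 3 ^ (i.val + 1 + 1)
        = (2/3) * ∑ i : Fin l, (2:ℚ) ^ (b i) / 3 ^ (i.val + 1) := by
      rw [Finset.mul_sum]
      refine Finset.sum_congr rfl fun i _ => ?_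
      rw [pow_succ 2 (b i), pow_succ 3 (i.val+1)]
      have : (3:ℚ)^(i.val+1) ≠ 0 := by positivity
      field_simp
    rw [hsum, pow_succ 2 m, pow_succ 3 l]
    have h3 : (3:ℚ) ^ l ≠ 0 := by positivity
    field_simp
    ring

lemma clz_one_two : ∀ m : ℕ, (InLambda m 1 → m = 0) ∧ (InLambda m 2 → m = 1) := by
  intro m
  induction m using Nat.strong_induction_on with
  | _ m ih =>
    match m with
    | 0 => exact ⟨fun _ => rfl, fun h => by have := clz_eq_pow (by norm_num) h; simp at this⟩
    | 1 =>
      refine ⟨fun h => ?_, fun _ => rfl⟩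
      have := clz_eq_pow (by norm_num) h; simp at this
    | 2 =>
      constructor
      · intro h; have := clz_eq_pow (by norm_num) h; norm_num at this
      · intro h; have := clz_eq_pow (by norm_num) h; norm_num at this
    | (m+3) =>
      constructor
      · intro h
        have h2 := clz_step_down h
        rw [show T 1 = 2 by decide] at h2
        have := (ih (m+2) (by omega)).2 h2
        omega
      · intro h
        have h2 := clz_step_down h
        rw [show T 2 = 1 by decide] at h2
        have := (ih (m+2) (by omega)).1 h2
        omega

lemma clz_backward : ∀ m n : ℕ, InLambda m n →
    (T^[m] n = 1 ∧ ∀ k : ℕ, k < m → T^[k] n ≠ 1) := by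
  intro m
  induction m with
  | zero =>
    intro n h
    have : n = 1 := by simpa using clz_eq_pow (by norm_num) h
    exact ⟨by simpa using this, fun k hk => by omega⟩
  | succ m ih =>
    intro n h
    have ht := clz_step_down h
    obtain ⟨h1, h2⟩ := ih (T n) ht
    refine ⟨by rwa [Function.iterate_succ_apply], ?_⟩
    intro k hk
    match k with
    | 0 =>
      simp only [Function.iterate_zero, id_eq]
      intro hn1
      subst hn1
      exact Nat.succ_ne_zero m ((clz_one_two (m+1)).1 h)
    | (j+1) =>
      rw [Function.iterate_succ_apply]
      exact h2 j (by omega)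

lemma clz_forward : ∀ m n : ℕ, (T^[m] n = 1 ∧ ∀ k : ℕ, k < m → T^[k] n ≠ 1) →
    InLambda m n := by
  intro m
  induction m with
  | zero =>
    intro n ⟨h1, _⟩
    simp only [Function.iterate_zero, id_eq] at h1
    subst h1
    exact ⟨0, fun i => i.elim0, by omega, fun i => i.elim0, fun i => i.elim0, by push_cast; simp⟩
  | succ m ih =>
    intro n ⟨h1, h2⟩
    have hn1 : n ≠ 1 := by simpa using h2 0 (by omega)
    have ht : InLambda m (T n) := by
      refine ih (T n) ⟨by rwa [← Function.iterate_succ_apply], ?_⟩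
      intro k hk
      rw [← Function.iterate_succ_apply]
      exact h2 (k+1) (by omega)
    rcases Nat.even_or_odd n with he | ho
    · have hev : n % 2 = 0 := Nat.even_iff.mp he
      have h2t : 2 * T n = n := by
        rw [clz_T_even hev]
        omega
      rw [← h2t]
      exact clz_up_even ht
    · have hodd : n % 2 = 1 := Nat.odd_iff.mp ho
      have h2t : 2 * T n = 3 * n + 1 := by
        rw [clz_T_odd hodd]
        omega
      have hm3 : 3 ≤ m := by
        by_contra hlt
        have := clz_eq_pow (m := m) (by omega) ht
        have hT : T n = (3 * n + 1) / 2 := clz_T_odd hodd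
        have hn3 : 3 ≤ n := by omega
        have : (3 * n + 1) / 2 = 2 ^ m := by rw [← hT, this]
        interval_cases m <;> omega
      exact clz_up_odd hm3 ht h2t

theorem stmt_14 (m n : ℕ) :
    (T^[m] n = 1 ∧ ∀ k : ℕ, k < m → T^[k] n ≠ 1) ↔ InLambda m n :=
  ⟨clz_forward m n, clz_backward m n⟩
end

section
/- The Collatz conjecture holds if and only if every natural number n can be represented as n = 2^m/3^l − Σ_{k=1}^l 2^{b_k}/3^k for some m, l, b₁, …, b_l ∈ ℕ with 0 ≤ l ≤ m−3 and 0 ≤ b₁ < b₂ < ⋯ < b_l ≤ m−4 (interpreting the case m ≤ 3 as n = 2^m with l = 0). -/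
lemma smono_le {l : ℕ} (b : Fin l → ℕ) (hb : StrictMono b) :
    ∀ j (h : j < l), j ≤ b ⟨j, h⟩ := by
  intro j; induction j with
  | zero => intro h; exact Nat.zero_le _
  | succ j ih =>
    intro h
    have hj : j < l := by omega
    have h1 := hb (show (⟨j, hj⟩ : Fin l) < ⟨j+1, h⟩ by simp [Fin.lt_def])
    have h2 := ih hj
    omega

lemma T_odd {n : ℕ} (h : n % 2 = 1) : 2 * T n = 3 * n + 1 := by
  unfold T; rw [if_pos h]; omega
lemma T_even {n : ℕ} (h : n % 2 = 0) : 2 * T n = n := by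
  unfold T; rw [if_neg (by omega)]; omega
lemma T_pos {n : ℕ} (h : 1 ≤ n) : 1 ≤ T n := by
  unfold T; split_ifs <;> omega
lemma T_eq_one {y : ℕ} (h : T y = 1) : y = 2 := by
  unfold T at h; split_ifs at h <;> omega
lemma T_eq_two {y : ℕ} (h : T y = 2) : y = 4 ∨ y = 1 := by
  unfold T at h; split_ifs at h <;> omega
lemma T_eq_four {y : ℕ} (h : T y = 4) : y = 8 := by
  unfold T at h; split_ifs at h <;> omega
lemma rep_iff (n m l : ℕ) (b : Fin l → ℕ) :
    ((n : ℚ) = 2 ^ m / 3 ^ l - ∑ i : Fin l, (2 ^ (b i) : ℚ) / 3 ^ (i.val + 1)) ↔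
    (3:ℚ) ^ l * n + ∑ i : Fin l, (2:ℚ) ^ (b i) * 3 ^ (l - (i.val + 1)) = 2 ^ m := by
  have h3 : (3:ℚ) ^ l ≠ 0 := by positivity
  have hterm : ∀ i ∈ Finset.univ, (2:ℚ) ^ (b i) * 3 ^ (l - (i.val + 1))
      = 3 ^ l * ((2:ℚ) ^ (b i) / 3 ^ (i.val + 1)) := by
    intro i _
    have hp : (3:ℚ) ^ (l - (i.val + 1)) = 3 ^ l / 3 ^ (i.val + 1) := by
      rw [eq_div_iff (by positivity), ← pow_add]
      congr 1
      have := i.isLt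
      omega
    rw [hp]; ring
  rw [Finset.sum_congr rfl hterm, ← Finset.mul_sum,
    eq_sub_iff_add_eq, eq_div_iff h3]
  constructor
  · intro h; linear_combination h
  · intro h; linear_combination h

lemma forward : ∀ (k n : ℕ), 1 ≤ n → T^[k] n = 1 → (∀ j, j < k → T^[j] n ≠ 1) →
    ∃ (l : ℕ) (b : Fin l → ℕ), l ≤ k - 3 ∧ StrictMono b ∧ (∀ i, b i ≤ k - 4) ∧
      (n : ℚ) = 2 ^ k / 3 ^ l - ∑ i : Fin l, (2 ^ (b i) : ℚ) / 3 ^ (i.val + 1) := by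
  intro k
  induction k with
  | zero =>
    intro n hn hk _
    simp at hk
    subst hk
    refine ⟨0, Fin.elim0, by omega, fun i => i.elim0, fun i => i.elim0, by simp⟩
  | succ k ih =>
    intro n hn hk hmin
    have hn1 : n ≠ 1 := fun h => hmin 0 (Nat.succ_pos k) (by simpa using h)
    have hTk : T^[k] (T n) = 1 := by rwa [← Function.iterate_succ_apply]
    have hTmin : ∀ j, j < k → T^[j] (T n) ≠ 1 := by
      intro j hj h
      exact hmin (j+1) (by omega) (by rwa [Function.iterate_succ_apply])
    have hT1 : 1 ≤ T n := T_pos hn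
    obtain ⟨l', b', hl', hmono', hbd', heq'⟩ := ih (T n) hT1 hTk hTmin
    rw [rep_iff] at heq'
    by_cases hpar : n % 2 = 1
    · -- n odd
      have hn3 : 3 ≤ n := by omega
      have hk3 : 3 ≤ k := by
        by_contra hc
        push_neg at hc
        interval_cases k
        · have h1 : T n = 1 := by simpa using hk
          have := T_eq_one h1; omega
        · have h1 : T (T n) = 1 := by
            rw [show (1+1 : ℕ) = 2 by rfl] at hk
            simpa [Function.iterate_succ_apply] using hk
          have h2 := T_eq_one h1
          rcases T_eq_two h2 with h | h <;> omega
        · have h1 : T (T (T n)) = 1 := by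
            rw [show (2+1 : ℕ) = 3 by rfl] at hk
            simpa [Function.iterate_succ_apply] using hk
          have h2 := T_eq_one h1
          rcases T_eq_two h2 with h | h
          · have := T_eq_four (show T n = 4 from h); omega
          · have := T_eq_one (show T n = 1 from h); omega
      have hT := T_odd hpar
      have hTQ : 2 * (T n : ℚ) = 3 * n + 1 := by exact_mod_cast hT
      refine ⟨l' + 1, Fin.cons 0 (fun i => b' i + 1), by omega, ?_, ?_, ?_⟩
      · intro x y hxy
        induction x using Fin.cases with
        | zero =>
          induction y using Fin.cases with
          | zero => exact absurd hxy (lt_irrefl _)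
          | succ j =>
            rw [Fin.cons_zero, Fin.cons_succ]
            omega
        | succ i =>
          induction y using Fin.cases with
          | zero => exact absurd hxy (by simp)
          | succ j =>
            rw [Fin.cons_succ, Fin.cons_succ]
            have := hmono' (Fin.succ_lt_succ_iff.mp hxy)
            omega
      · intro i
        induction i using Fin.cases with
        | zero => simp
        | succ j =>
          rw [Fin.cons_succ]
          have h1 := hbd' j
          have h2 := j.isLt
          omega
      · rw [rep_iff, Fin.sum_univ_succ]
        simp only [Fin.cons_zero, Fin.cons_succ, Fin.val_zero, Fin.val_succ, pow_zero,
          one_mul, zero_add, Nat.add_sub_cancel]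
        have hsum : ∑ i : Fin l', (2:ℚ) ^ (b' i + 1) * 3 ^ (l' + 1 - (i.val + 1 + 1))
            = 2 * ∑ i : Fin l', (2:ℚ) ^ (b' i) * 3 ^ (l' - (i.val + 1)) := by
          rw [Finset.mul_sum]
          apply Finset.sum_congr rfl
          intro i _
          have hle : l' + 1 - (i.val + 1 + 1) = l' - (i.val + 1) := by omega
          rw [hle, pow_succ]
          ring
        linear_combination 2 * heq' - (3:ℚ)^l' * hTQ + hsum
    · -- n even
      have hpar' : n % 2 = 0 := by omega
      have hT := T_even hpar'
      have hTQ : 2 * (T n : ℚ) = n := by exact_mod_cast hT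
      refine ⟨l', fun i => b' i + 1, by omega, ?_, ?_, ?_⟩
      · intro i j hij
        have := hmono' hij
        show b' i + 1 < b' j + 1
        omega
      · intro i
        have h1 := hbd' i
        have h2 := i.isLt
        show b' i + 1 ≤ k + 1 - 4
        omega
      · rw [rep_iff]
        have hsum : ∑ i : Fin l', (2:ℚ) ^ (b' i + 1) * 3 ^ (l' - (i.val + 1))
            = 2 * ∑ i : Fin l', (2:ℚ) ^ (b' i) * 3 ^ (l' - (i.val + 1)) := by
          rw [Finset.mul_sum]
          apply Finset.sum_congr rfl
          intro i _
          rw [pow_succ]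
          ring
        linear_combination 2 * heq' - (3:ℚ)^l' * hTQ + hsum

lemma converse : ∀ (m n l : ℕ) (b : Fin l → ℕ), l ≤ m - 3 → StrictMono b →
    (∀ i, b i ≤ m - 4) →
    ((n : ℚ) = 2 ^ m / 3 ^ l - ∑ i : Fin l, (2 ^ (b i) : ℚ) / 3 ^ (i.val + 1)) →
    T^[m] n = 1 := by
  intro m
  induction m with
  | zero =>
    intro n l b hl hmono hbd hq
    have hl0 : l = 0 := by omega
    subst hl0
    simp at hq
    have : n = 1 := by exact_mod_cast hq
    simpa using this
  | succ m ih =>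
    intro n l b hl hmono hbd hq
    rw [rep_iff] at hq
    rcases l with _ | l''
    · -- l = 0 : n = 2^(m+1)
      simp at hq
      have hn : n = 2 ^ (m+1) := by exact_mod_cast hq
      have hps : (2:ℕ) ^ (m+1) = 2 * 2 ^ m := by rw [pow_succ]; ring
      have hpar : n % 2 = 0 := by omega
      have hT : T n = 2 ^ m := by
        have := T_even hpar
        omega
      rw [Function.iterate_succ_apply, hT]
      exact ih (2^m) 0 b (by omega) hmono (fun i => i.elim0) (by simp)
    · -- l = l'' + 1
      have hNat : 3 ^ (l''+1) * n + ∑ i : Fin (l''+1), 2 ^ (b i) * 3 ^ (l''+1 - (i.val + 1))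
          = 2 ^ (m+1) := by exact_mod_cast hq
      rw [Fin.sum_univ_succ] at hNat hq
      simp only [Fin.val_zero, Fin.val_succ] at hNat hq
      have h3a : (3:ℕ) ^ (l''+1) % 2 = 1 := by rw [Nat.pow_mod]; simp
      have h3b : (3:ℕ) ^ l'' % 2 = 1 := by rw [Nat.pow_mod]; simp
      have h2m : (2:ℕ) ^ (m+1) % 2 = 0 := by simp [pow_succ, Nat.mul_mod]
      have hmm : (3 ^ (l''+1) * n) % 2 = n % 2 := by
        rw [Nat.mul_mod, h3a]; simp [Nat.mod_mod]
      by_cases hb0 : b 0 = 0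
      · -- n odd
        have hge1 : ∀ i : Fin l'', 1 ≤ b i.succ := by
          intro i
          have := hmono (show (0 : Fin (l''+1)) < i.succ from Fin.succ_pos i)
          omega
        -- tail sum is even
        have hdvd : 2 ∣ ∑ i : Fin l'', 2 ^ (b i.succ) * 3 ^ (l''+1 - (i.val + 1 + 1)) := by
          apply Finset.dvd_sum
          intro i _
          exact Dvd.dvd.mul_right (dvd_pow_self 2 (by have := hge1 i; omega)) _
        obtain ⟨s, hs⟩ := hdvd
        rw [hs, hb0] at hNat
        simp only [pow_zero, one_mul, Nat.add_sub_cancel] at hNat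
        have hpar : n % 2 = 1 := by omega
        have hT := T_odd hpar
        have hTQ : 2 * (T n : ℚ) = 3 * n + 1 := by exact_mod_cast hT
        -- new data
        have hmono'' : StrictMono (fun i : Fin l'' => b i.succ - 1) := by
          intro i j hij
          have h1 := hmono (show i.succ < j.succ from Fin.succ_lt_succ_iff.mpr hij)
          have h2 := hge1 i
          simp only
          omega
        have hbd'' : ∀ i : Fin l'', b i.succ - 1 ≤ m - 4 := by
          intro i
          have := hbd i.succ
          omega
        have hl'' : l'' ≤ m - 3 := by omega
        -- ℚ identity for T n
        have hsum : ∑ i : Fin l'', (2:ℚ) ^ (b i.succ) * 3 ^ (l''+1 - (i.val + 1 + 1))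
            = 2 * ∑ i : Fin l'', (2:ℚ) ^ (b i.succ - 1) * 3 ^ (l'' - (i.val + 1)) := by
          rw [Finset.mul_sum]
          apply Finset.sum_congr rfl
          intro i _
          have hbe : b i.succ = (b i.succ - 1) + 1 := by have := hge1 i; omega
          have hle : l''+1 - (i.val + 1 + 1) = l'' - (i.val + 1) := by omega
          rw [hle]
          nth_rewrite 1 [hbe]
          rw [pow_succ]
          ring
        rw [hb0, hsum] at hq
        have hTrep : (3:ℚ) ^ l'' * (T n)
            + ∑ i : Fin l'', (2:ℚ) ^ (b i.succ - 1) * 3 ^ (l'' - (i.val + 1)) = 2 ^ m := by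
          simp only [pow_zero, one_mul, Nat.add_sub_cancel] at hq
          linear_combination (1/2 : ℚ) * hq + (3:ℚ)^l''/2 * hTQ
        rw [Function.iterate_succ_apply]
        exact ih (T n) l'' _ hl'' hmono'' hbd'' ((rep_iff _ _ _ _).mpr hTrep)
      · -- b 0 ≥ 1 : n even
        have hge1 : ∀ i : Fin (l''+1), 1 ≤ b i := by
          intro i
          have := hmono.monotone (Fin.zero_le i)
          omega
        have hdvd0 : 2 ∣ 2 ^ (b 0) * 3 ^ (l''+1 - (0 + 1)) :=
          Dvd.dvd.mul_right (dvd_pow_self 2 (by omega)) _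
        have hdvd : 2 ∣ ∑ i : Fin l'', 2 ^ (b i.succ) * 3 ^ (l''+1 - (i.val + 1 + 1)) := by
          apply Finset.dvd_sum
          intro i _
          exact Dvd.dvd.mul_right (dvd_pow_self 2 (by have := hge1 i.succ; omega)) _
        obtain ⟨s, hs⟩ := hdvd
        obtain ⟨s0, hs0⟩ := hdvd0
        rw [hs, hs0] at hNat
        have hpar : n % 2 = 0 := by omega
        have hT := T_even hpar
        have hTQ : 2 * (T n : ℚ) = n := by exact_mod_cast hT
        -- l''+1 ≤ m - 3
        have hlast : l'' + 1 ≤ b ⟨l'', by omega⟩ := by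
          have h3 := smono_le (fun i => b i - b 0) (by
            intro i j hij
            have := hmono hij
            have hi := hmono.monotone (Fin.zero_le i)
            have hj := hmono.monotone (Fin.zero_le j)
            show b i - b 0 < b j - b 0
            omega) l'' (by omega)
          have h3' : l'' ≤ b ⟨l'', by omega⟩ - b 0 := h3
          have h4 := hge1 (0 : Fin (l''+1))
          have h5 := hmono.monotone (Fin.zero_le (⟨l'', by omega⟩ : Fin (l''+1)))
          omega
        have hlL : l''+1 ≤ m - 3 := by
          have := hbd ⟨l'', by omega⟩
          omega
        have hmono'' : StrictMono (fun i : Fin (l''+1) => b i - 1) := by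
          intro i j hij
          have h1 := hmono hij
          have h2 := hge1 i
          simp only
          omega
        have hbd'' : ∀ i : Fin (l''+1), b i - 1 ≤ m - 4 := by
          intro i
          have h1 := hbd i
          have h2 := hge1 i
          omega
        have hsum : (2:ℚ) ^ (b 0) * 3 ^ (l''+1 - (0 + 1))
              + ∑ i : Fin l'', (2:ℚ) ^ (b i.succ) * 3 ^ (l''+1 - (i.val + 1 + 1))
            = 2 * ((2:ℚ) ^ (b 0 - 1) * 3 ^ (l''+1 - (0 + 1))
              + ∑ i : Fin l'', (2:ℚ) ^ (b i.succ - 1) * 3 ^ (l''+1 - (i.val + 1 + 1))) := by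
          rw [mul_add, Finset.mul_sum]
          congr 1
          · have hbe : b 0 = (b 0 - 1) + 1 := by have := hge1 0; omega
            nth_rewrite 1 [hbe]
            rw [pow_succ]; ring
          · apply Finset.sum_congr rfl
            intro i _
            have hbe : b i.succ = (b i.succ - 1) + 1 := by have := hge1 i.succ; omega
            nth_rewrite 1 [hbe]
            rw [pow_succ]; ring
        have hTrep : (3:ℚ) ^ (l''+1) * (T n)
            + ((2:ℚ) ^ (b 0 - 1) * 3 ^ (l''+1 - (0 + 1))
              + ∑ i : Fin l'', (2:ℚ) ^ (b i.succ - 1) * 3 ^ (l''+1 - (i.val + 1 + 1))) = 2 ^ m := by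
          linear_combination (1/2 : ℚ) * hq + (3:ℚ)^(l''+1)/2 * hTQ - (1/2 : ℚ) * hsum
        rw [Function.iterate_succ_apply]
        refine ih (T n) (l''+1) (fun i => b i - 1) hlL hmono'' hbd''
          ((rep_iff _ _ _ _).mpr ?_)
        rw [Fin.sum_univ_succ]
        simp only [Fin.val_zero, Fin.val_succ]
        exact hTrep

theorem stmt_15 :
    (∀ n : ℕ, 1 ≤ n → ∃ k : ℕ, T^[k] n = 1) ↔
    (∀ n : ℕ, 1 ≤ n → ∃ m : ℕ, InLambda m n) := by
  constructor
  · intro h n hn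
    have hex := h n hn
    refine ⟨Nat.find hex, ?_⟩
    unfold InLambda
    exact forward (Nat.find hex) n hn (Nat.find_spec hex)
      (fun j hj => Nat.find_min hex hj)
  · intro h n hn
    obtain ⟨m, l, b, h1, h2, h3, h4⟩ := h n hn
    exact ⟨m, converse m n l b h1 h2 h3 h4⟩
end

section
/- For m even with m ≥ 4 and 0 ≤ k ≤ (m−4)/2, the number (2^m − 2^{2k})/3 is a natural number with total stopping time exactly m; for m odd with m ≥ 5 and 0 ≤ k ≤ (m−5)/2, the number (2^m − 2^{2k+1})/3 is a natural number with total stopping time exactly m. -/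
lemma iterT (b c : ℕ) : ∀ j, j ≤ b → T^[j] (2 ^ b * c) = 2 ^ (b - j) * c := by
  intro j hj
  induction j with
  | zero => simp
  | succ n ih =>
    rw [Function.iterate_succ_apply', ih (by omega)]
    have h1 : b - n = (b - (n + 1)) + 1 := by omega
    rw [h1, pow_succ]
    have h2 : 2 ^ (b - (n + 1)) * 2 * c = 2 * (2 ^ (b - (n + 1)) * c) := by ring
    unfold T
    rw [h2, if_neg (by omega), Nat.mul_div_cancel_left _ two_pos]

lemma key (b d : ℕ) (hd : 4 ≤ d) (h3 : 3 ∣ 2 ^ d - 1) :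
    T^[b + d] (2 ^ b * ((2 ^ d - 1) / 3)) = 1 ∧
    ∀ j < b + d, T^[j] (2 ^ b * ((2 ^ d - 1) / 3)) ≠ 1 := by
  set c := (2 ^ d - 1) / 3 with hc
  have hpd : 2 ^ d = 2 * 2 ^ (d - 1) := by
    rw [← pow_succ']; congr 1; omega
  have hge : 16 ≤ 2 ^ d := by
    calc (16 : ℕ) = 2 ^ 4 := by norm_num
    _ ≤ 2 ^ d := Nat.pow_le_pow_right (by norm_num) hd
  have hc3 : 3 * c = 2 ^ d - 1 := by
    obtain ⟨t, ht⟩ := h3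
    rw [hc, ht]; omega
  have hc5 : 5 ≤ c := by omega
  have hco : c % 2 = 1 := by omega
  have hTc : T c = 2 ^ (d - 1) := by
    unfold T
    rw [if_pos hco]
    have : 3 * c + 1 = 2 * 2 ^ (d - 1) := by omega
    rw [this, Nat.mul_div_cancel_left _ two_pos]
  have hb : T^[b] (2 ^ b * c) = c := by
    simpa using iterT b c b le_rfl
  have hmid : ∀ i, i ≤ d - 1 → T^[i + (1 + b)] (2 ^ b * c) = 2 ^ (d - 1 - i) := by
    intro i hi
    rw [Function.iterate_add_apply, Function.iterate_add_apply,
      Function.iterate_one, hb, hTc]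
    simpa using iterT (d - 1) 1 i hi
  constructor
  · have h := hmid (d - 1) le_rfl
    have he : (d - 1) + (1 + b) = b + d := by omega
    rw [he] at h
    simpa using h
  · intro j hj hone
    by_cases hjb : j ≤ b
    · rw [iterT b c j hjb] at hone
      have h1 : 1 ≤ 2 ^ (b - j) := Nat.one_le_two_pow
      have : c ≤ 2 ^ (b - j) * c := Nat.le_mul_of_pos_left c (by omega)
      omega
    · have hi : j - (1 + b) ≤ d - 1 := by omega
      have h := hmid (j - (1 + b)) hi
      have he : (j - (1 + b)) + (1 + b) = j := by omega
      rw [he, hone] at h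
      have h2 : 1 ≤ d - 1 - (j - (1 + b)) := by omega
      have : 2 ≤ 2 ^ (d - 1 - (j - (1 + b))) := by
        calc (2:ℕ) = 2 ^ 1 := by norm_num
        _ ≤ _ := Nat.pow_le_pow_right (by norm_num) h2
      omega

lemma case (m b : ℕ) (hb : b + 4 ≤ m) (h3 : 3 ∣ 2 ^ (m - b) - 1) :
    3 ∣ 2 ^ m - 2 ^ b ∧ T^[m] ((2 ^ m - 2 ^ b) / 3) = 1 ∧
      ∀ j : ℕ, j < m → T^[j] ((2 ^ m - 2 ^ b) / 3) ≠ 1 := by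
  set d := m - b with hd
  have hsplit : 2 ^ m - 2 ^ b = 2 ^ b * (2 ^ d - 1) := by
    rw [Nat.mul_sub, mul_one, ← pow_add]
    congr 2
    omega
  have hdvd : 3 ∣ 2 ^ m - 2 ^ b := by
    rw [hsplit]; exact Dvd.dvd.mul_left h3 _
  have hq : (2 ^ m - 2 ^ b) / 3 = 2 ^ b * ((2 ^ d - 1) / 3) := by
    rw [hsplit, Nat.mul_div_assoc _ h3]
  have hbd : b + d = m := by omega
  obtain ⟨h1, h2⟩ := key b d (by omega) h3
  rw [hbd] at h1 h2
  exact ⟨hdvd, by rw [hq]; exact h1, by intro j hj; rw [hq]; exact h2 j hj⟩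

lemma three_dvd (d : ℕ) (hd : d % 2 = 0) : 3 ∣ 2 ^ d - 1 := by
  obtain ⟨t, ht⟩ := Nat.even_iff.mpr hd
  have h : 2 ^ d = 4 ^ t := by
    subst ht; rw [show t + t = 2 * t by ring, pow_mul]; norm_num
  rw [h]
  simpa using Nat.sub_dvd_pow_sub_pow 4 1 t

theorem stmt_16 (m k : ℕ) :
    (m % 2 = 0 → 4 ≤ m → k ≤ (m - 4) / 2 →
      3 ∣ 2 ^ m - 2 ^ (2 * k) ∧
      T^[m] ((2 ^ m - 2 ^ (2 * k)) / 3) = 1 ∧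
      ∀ j : ℕ, j < m → T^[j] ((2 ^ m - 2 ^ (2 * k)) / 3) ≠ 1) ∧
    (m % 2 = 1 → 5 ≤ m → k ≤ (m - 5) / 2 →
      3 ∣ 2 ^ m - 2 ^ (2 * k + 1) ∧
      T^[m] ((2 ^ m - 2 ^ (2 * k + 1)) / 3) = 1 ∧
      ∀ j : ℕ, j < m → T^[j] ((2 ^ m - 2 ^ (2 * k + 1)) / 3) ≠ 1) := by
  constructor
  · intro h0 h4 hk
    exact case m (2 * k) (by omega) (three_dvd _ (by omega))
  · intro h1 h5 hk
    exact case m (2 * k + 1) (by omega) (three_dvd _ (by omega))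
end

section
/- For every m ∈ ℕ with m ≥ 2, the number (2^{2m} − 1)/3 is a natural number whose trajectory under T reaches 1 in exactly 2m steps; i.e., (4^m − 1)/3 ∈ S_{2m}. -/
lemma T_two_pow (k : ℕ) : T (2 ^ (k + 1)) = 2 ^ k := by
  unfold T
  have h : 2 ^ (k + 1) % 2 = 0 := by
    simp [pow_succ, Nat.mul_mod_left]
  rw [if_neg (by omega)]
  rw [pow_succ]
  omega

lemma T_iter_two_pow (j : ℕ) : ∀ k, j ≤ k → T^[j] (2 ^ k) = 2 ^ (k - j) := by
  induction j with
  | zero => intro k _; simp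
  | succ j ih =>
    intro k hk
    obtain ⟨l, rfl⟩ : ∃ l, k = l + 1 := ⟨k - 1, by omega⟩
    rw [Function.iterate_succ_apply, T_two_pow]
    rw [ih l (by omega)]
    congr 1
    omega

theorem stmt_19 (m : ℕ) (hm : 2 ≤ m) :
    3 ∣ 2 ^ (2 * m) - 1 ∧
    T^[2 * m] ((2 ^ (2 * m) - 1) / 3) = 1 ∧
    ∀ j : ℕ, j < 2 * m → T^[j] ((2 ^ (2 * m) - 1) / 3) ≠ 1 := by
  have hmod : 2 ^ (2 * m) % 3 = 1 := by
    rw [pow_mul]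
    rw [Nat.pow_mod]
    norm_num
  have hge : 16 ≤ 2 ^ (2 * m) := by
    calc (16 : ℕ) = 2 ^ 4 := by norm_num
    _ ≤ 2 ^ (2 * m) := Nat.pow_le_pow_right (by norm_num) (by omega)
  have hdvd : 3 ∣ 2 ^ (2 * m) - 1 := by omega
  set n := (2 ^ (2 * m) - 1) / 3 with hn
  have h3n : 3 * n + 1 = 2 ^ (2 * m) := by
    have := Nat.div_mul_cancel hdvd
    omega
  have heven : 2 ^ (2 * m) % 2 = 0 := by
    have : (2 : ℕ) ∣ 2 ^ (2 * m) := dvd_pow_self 2 (by omega)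
    omega
  have hodd : n % 2 = 1 := by omega
  have hTn : T n = 2 ^ (2 * m - 1) := by
    have hp : 2 ^ (2 * m) = 2 ^ (2 * m - 1) * 2 := by
      rw [← pow_succ]; congr 1; omega
    unfold T
    rw [if_pos hodd, h3n, hp]
    omega
  refine ⟨hdvd, ?_, ?_⟩
  · have h2m : 2 * m = (2 * m - 1) + 1 := by omega
    rw [h2m, Function.iterate_add_apply]
    simp only [Function.iterate_one, hTn]
    rw [T_iter_two_pow _ _ le_rfl]
    simp
  · intro j hj
    rcases Nat.eq_zero_or_pos j with rfl | hjpos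
    · simp only [Function.iterate_zero, id]
      omega
    · have hj1 : j = (j - 1) + 1 := by omega
      rw [hj1, Function.iterate_add_apply]
      simp only [Function.iterate_one, hTn]
      rw [T_iter_two_pow _ _ (by omega)]
      have h1 : 1 ≤ 2 * m - 1 - (j - 1) := by omega
      have : 2 ≤ 2 ^ (2 * m - 1 - (j - 1)) :=
        le_trans (by norm_num) (Nat.pow_le_pow_right (by norm_num) h1)
      omega
end
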